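/- Let X and W be independent random variables on a finite group G, E a uniform {0,1}-random variable independent of both. Suppose Pr(W ∉ supp(X)) ≥ δ and Pr(W=g) = max_{h∈G} Pr(W=h) for all g ∈ supp(X). Let λ > 1. Then with probability at least 1 − 1/λ over g drawn from the distribution of W, ‖Xg^E‖ < √(λ(1 − δ/2))·‖X‖. -/

import Mathlib

open Finset

variable {G : Type*} [Fintype G] [Group G]

def IsPMF (μ : G → ℝ) : Prop := (∀ g, 0 ≤ μ g) ∧ ∑ g, μ g = 1

noncomputable def l2norm (μ : G → ℝ) : ℝ := Real.sqrt (∑ g, μ g ^ 2)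

open Classical in
theorem stmt15 [Nonempty G] (μ ω : G → ℝ) (hμ : IsPMF μ) (hω : IsPMF ω)
    (δ : ℝ) (hδ0 : 0 ≤ δ) (hδ1 : δ ≤ 1)
    (hout : δ ≤ ∑ g ∈ univ.filter (fun g => ¬ 0 < μ g), ω g)
    (hmax : ∀ g, 0 < μ g → ω g = univ.sup' univ_nonempty ω)
    (lam : ℝ) (hlam : 1 < lam) :
    1 - 1 / lam ≤ ∑ g ∈ univ.filter (fun g =>
      Real.sqrt (∑ h : G, ((μ h + μ (h * g⁻¹)) / 2) ^ 2) <
        Real.sqrt (lam * (1 - δ / 2)) * l2norm μ), ω g := by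
  obtain ⟨hμ0, hμ1⟩ := hμ
  obtain ⟨hω0, hω1⟩ := hω
  set S : ℝ := ∑ g, μ g ^ 2 with hSdef
  set M : ℝ := univ.sup' univ_nonempty ω with hMdef
  set f : G → ℝ := fun g => ∑ h : G, ((μ h + μ (h * g⁻¹)) / 2) ^ 2 with hfdef
  set T : Finset G := univ.filter (fun g => 0 < μ g) with hTdef
  have hμT : ∀ g ∈ univ.filter (fun g => ¬ 0 < μ g), μ g = 0 := by
    intro g hg
    rcases mem_filter.1 hg with ⟨-, hg⟩
    exact le_antisymm (not_lt.1 hg) (hμ0 g)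
  have hsplit := Finset.sum_filter_add_sum_filter_not univ (fun g => 0 < μ g) μ
  have hμT1 : ∑ g ∈ T, μ g = 1 := by
    rw [← hμ1, ← hsplit, Finset.sum_eq_zero hμT, add_zero]
  have hST : ∑ g ∈ T, μ g ^ 2 ≤ S := by
    apply Finset.sum_le_sum_of_subset_of_nonneg (filter_subset _ _)
    intro i _ _; positivity
  have hcard : 1 ≤ (T.card : ℝ) * S := by
    have h1 : (∑ g ∈ T, μ g) ^ 2 ≤ (T.card : ℝ) * ∑ g ∈ T, μ g ^ 2 := by
      exact_mod_cast sq_sum_le_card_mul_sum_sq (s := T) (f := μ)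
    rw [hμT1, one_pow] at h1
    calc (1:ℝ) ≤ (T.card : ℝ) * ∑ g ∈ T, μ g ^ 2 := h1
      _ ≤ (T.card : ℝ) * S := by
          apply mul_le_mul_of_nonneg_left hST (by positivity)
  have hS0 : 0 < S := by
    by_contra h
    push_neg at h
    have : (T.card : ℝ) * S ≤ 0 :=
      mul_nonpos_of_nonneg_of_nonpos (by positivity) h
    linarith
  have hωM : ∀ g, ω g ≤ M := fun g => le_sup' ω (mem_univ g)
  have hM0 : 0 ≤ M := (hω0 (Classical.arbitrary G)).trans (hωM _)
  have hTM : ∑ g ∈ T, ω g = (T.card : ℝ) * M := by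
    rw [Finset.sum_congr rfl (fun g hg => hmax g (mem_filter.1 hg).2)]
    simp [mul_comm, hTdef]
  have hTle : (T.card : ℝ) * M ≤ 1 - δ := by
    rw [← hTM]
    have hsplitω := Finset.sum_filter_add_sum_filter_not univ (fun g => 0 < μ g) ω
    rw [hω1] at hsplitω
    linarith
  have hMS : M ≤ (1 - δ) * S := by
    nlinarith [mul_le_mul_of_nonneg_left hcard hM0,
      mul_le_mul_of_nonneg_right hTle (le_of_lt hS0)]
  -- convolution term
  set c : G → ℝ := fun g => ∑ h : G, μ h * μ (h * g⁻¹) with hcdef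
  have hc0 : ∀ g, 0 ≤ c g := fun g =>
    Finset.sum_nonneg fun h _ => mul_nonneg (hμ0 h) (hμ0 _)
  have hshift : ∀ g : G, ∑ h : G, μ (h * g⁻¹) ^ 2 = S := by
    intro g
    exact Fintype.sum_equiv (Equiv.mulRight g⁻¹) _ _ (fun h => rfl)
  have hfS : ∀ g, f g = S / 2 + c g / 2 := by
    intro g
    have : f g = ∑ h : G, (μ h ^ 2 / 4 + μ (h * g⁻¹) ^ 2 / 4 + μ h * μ (h * g⁻¹) / 2) := by
      apply Finset.sum_congr rfl
      intro h _; ring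
    rw [this, Finset.sum_add_distrib, Finset.sum_add_distrib,
      ← Finset.sum_div, ← Finset.sum_div, ← Finset.sum_div, hshift]
    simp only [hcdef]
    ring
  have hcsum : ∑ g, c g = 1 := by
    rw [hcdef]
    rw [Finset.sum_comm]
    have : ∀ h : G, ∑ g : G, μ h * μ (h * g⁻¹) = μ h := by
      intro h
      rw [← Finset.mul_sum]
      have : ∑ g : G, μ (h * g⁻¹) = 1 := by
        rw [← hμ1]
        exact Fintype.sum_equiv ((Equiv.inv G).trans (Equiv.mulLeft h)) _ _ (fun g => rfl)
      rw [this, mul_one]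
    rw [Finset.sum_congr rfl (fun h _ => this h), hμ1]
  have hE : ∑ g, ω g * f g ≤ (1 - δ / 2) * S := by
    have h1 : ∑ g, ω g * f g = S / 2 + (∑ g, ω g * c g) / 2 := by
      calc ∑ g, ω g * f g = ∑ g, (ω g * (S / 2) + ω g * c g / 2) := by
            apply Finset.sum_congr rfl; intro g _; rw [hfS g]; ring
        _ = (∑ g, ω g) * (S / 2) + (∑ g, ω g * c g) / 2 := by
            rw [Finset.sum_add_distrib, ← Finset.sum_mul, ← Finset.sum_div]
        _ = S / 2 + (∑ g, ω g * c g) / 2 := by rw [hω1, one_mul]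
    have h2 : ∑ g, ω g * c g ≤ M := by
      calc ∑ g, ω g * c g ≤ ∑ g, M * c g :=
            Finset.sum_le_sum fun g _ => mul_le_mul_of_nonneg_right (hωM g) (hc0 g)
        _ = M := by rw [← Finset.mul_sum, hcsum, mul_one]
    rw [h1]; linarith
  -- Markov
  set t : ℝ := lam * ((1 - δ / 2) * S) with htdef
  have ht0 : 0 < t := by
    apply mul_pos (by linarith)
    apply mul_pos (by linarith) hS0
  have hf0 : ∀ g, 0 ≤ f g := fun g => Finset.sum_nonneg fun h _ => sq_nonneg _
  have hA : ∑ g ∈ univ.filter (fun g => t ≤ f g), ω g ≤ 1 / lam := by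
    have h1 : t * ∑ g ∈ univ.filter (fun g => t ≤ f g), ω g ≤ ∑ g, ω g * f g := by
      calc t * ∑ g ∈ univ.filter (fun g => t ≤ f g), ω g
          = ∑ g ∈ univ.filter (fun g => t ≤ f g), t * ω g := by rw [Finset.mul_sum]
        _ ≤ ∑ g ∈ univ.filter (fun g => t ≤ f g), ω g * f g := by
            apply Finset.sum_le_sum
            intro g hg
            rw [mul_comm]
            exact mul_le_mul_of_nonneg_left (mem_filter.1 hg).2 (hω0 g)
        _ ≤ ∑ g, ω g * f g := by
            apply Finset.sum_le_sum_of_subset_of_nonneg (filter_subset _ _)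
            intro g _ _
            exact mul_nonneg (hω0 g) (hf0 g)
    have h2 : t * ∑ g ∈ univ.filter (fun g => t ≤ f g), ω g ≤ (1 - δ / 2) * S :=
      h1.trans hE
    rw [div_eq_inv_mul]
    rw [← mul_le_mul_iff_of_pos_left ht0]
    calc t * ∑ g ∈ univ.filter (fun g => t ≤ f g), ω g ≤ (1 - δ / 2) * S := h2
      _ = t * (lam⁻¹ * 1) := by
          rw [htdef]; field_simp
  -- identify the target filter
  have hpred : ∀ g : G, (Real.sqrt (∑ h : G, ((μ h + μ (h * g⁻¹)) / 2) ^ 2) <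
      Real.sqrt (lam * (1 - δ / 2)) * l2norm μ) ↔ f g < t := by
    intro g
    have hrhs : Real.sqrt (lam * (1 - δ / 2)) * l2norm μ = Real.sqrt t := by
      rw [l2norm, ← Real.sqrt_mul (by nlinarith), htdef, ← hSdef, mul_assoc]
    rw [hrhs]
    exact Real.sqrt_lt_sqrt_iff (hf0 g)
  rw [Finset.sum_congr (Finset.filter_congr (fun g _ => hpred g)) (fun _ _ => rfl)]
  have hsplit2 := Finset.sum_filter_add_sum_filter_not univ (fun g => f g < t) ω
  rw [hω1] at hsplit2
  have : univ.filter (fun g => ¬ f g < t) = univ.filter (fun g => t ≤ f g) := by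
    apply Finset.filter_congr; intro g _; simp [not_lt]
  rw [this] at hsplit2
  have hlam0 : 0 < lam := by linarith
  linarith
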